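/- Let M = [[A, B],[B*, C]] be a Hermitian block matrix of complex matrices. Then M is positive semidefinite if and only if: A is positive semidefinite, there exists a matrix W with B = A W, and C − W* A W is positive semidefinite (for some, equivalently any, such W). -/

import Mathlib

open Matrix ComplexOrder
variable {m n : ℕ}

lemma star_sum_elim (x : Fin m → ℂ) (y : Fin n → ℂ) :
    star (Sum.elim x y) = Sum.elim (star x) (star y) := by
  funext i; cases i <;> rfl

lemma quad_blocks (A : Matrix (Fin m) (Fin m) ℂ) (B : Matrix (Fin m) (Fin n) ℂ)
    (C : Matrix (Fin n) (Fin n) ℂ) (x : Fin m → ℂ) (y : Fin n → ℂ) :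
    star (Sum.elim x y) ⬝ᵥ (fromBlocks A B Bᴴ C) *ᵥ (Sum.elim x y) =
      star x ⬝ᵥ A *ᵥ x + star x ⬝ᵥ B *ᵥ y + star y ⬝ᵥ Bᴴ *ᵥ x + star y ⬝ᵥ C *ᵥ y := by
  rw [star_sum_elim, fromBlocks_mulVec, sumElim_dotProduct_sumElim, dotProduct_add,
    dotProduct_add]
  simp only [Sum.elim_comp_inl, Sum.elim_comp_inr]
  ring

lemma ker_lemma {A : Matrix (Fin m) (Fin m) ℂ} {B : Matrix (Fin m) (Fin n) ℂ}
    {C : Matrix (Fin n) (Fin n) ℂ}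
    (hM : (fromBlocks A B Bᴴ C).PosSemidef) (x : Fin m → ℂ) (hx : A *ᵥ x = 0) :
    Bᴴ *ᵥ x = 0 := by
  set w := Bᴴ *ᵥ x with hw
  set r := star w ⬝ᵥ w with hrdef
  set c := star w ⬝ᵥ C *ᵥ w with hcdef
  have hsw : star x ᵥ* B = star w := by
    rw [hw, star_mulVec, conjTranspose_conjTranspose]
  have hr0 : 0 ≤ r := dotProduct_star_self_nonneg w
  have hc0 : 0 ≤ c := by
    have := hM.dotProduct_mulVec_nonneg (Sum.elim 0 w)
    rwa [quad_blocks, star_zero, zero_dotProduct, zero_dotProduct, mulVec_zero,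
      dotProduct_zero, zero_add, zero_add, zero_add] at this
  have key : ∀ t : ℝ, 0 ≤ -(t:ℂ) * r + -(t:ℂ) * r + (t:ℂ)^2 * c := by
    intro t
    have := hM.dotProduct_mulVec_nonneg (Sum.elim x ((-(t:ℂ)) • w))
    rw [quad_blocks] at this
    rw [hx, dotProduct_zero] at this
    rw [mulVec_smul, dotProduct_smul, dotProduct_mulVec, hsw] at this
    rw [star_smul, smul_dotProduct, mulVec_smul, dotProduct_smul] at this
    have hst : star (-(t:ℂ)) = -(t:ℂ)  := by simp
    rw [hst] at this
    simp only [smul_dotProduct, dotProduct_smul, smul_eq_mul] at this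
    rw [← hrdef, ← hcdef] at this
    convert this using 1
    ring
  have hrre : r.re ≤ 0 := by
    by_contra h
    push_neg at h
    have hcre : 0 ≤ c.re := (Complex.le_def.mp hc0).1
    have him : r.im = 0 := ((Complex.le_def.mp hr0).2).symm
    have hcim : c.im = 0 := ((Complex.le_def.mp hc0).2).symm
    set t : ℝ := r.re / (c.re + 1) with ht
    have ht0 : 0 < t := div_pos h (by linarith)
    have := (Complex.le_def.mp (key t)).1
    simp only [Complex.add_re, Complex.mul_re, Complex.neg_re, Complex.neg_im,
      Complex.ofReal_re, Complex.ofReal_im, him, hcim, Complex.zero_re] at this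
    have hpow : ((t:ℂ)^2).re = t^2 := by
      norm_cast
    rw [hpow] at this
    -- this : 0 ≤ -t * r.re - 0 + (-t * r.re - 0) + (t^2 * c.re - ?)
    have htc : t * (c.re + 1) = r.re := by
      rw [ht]; exact div_mul_cancel₀ _ (ne_of_gt (by linarith))
    nlinarith [this, sq_nonneg t]
  have hrre0 : 0 ≤ r.re := (Complex.le_def.mp hr0).1
  have him : r.im = 0 := ((Complex.le_def.mp hr0).2).symm
  have : r = 0 := Complex.ext (le_antisymm hrre hrre0) him
  exact dotProduct_star_self_eq_zero.mp (hrdef ▸ this)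

lemma exists_pinv {A : Matrix (Fin m) (Fin m) ℂ} (hA : A.IsHermitian) :
    ∃ P : Matrix (Fin m) (Fin m) ℂ, A * P * A = A ∧ (A * P)ᴴ = A * P ∧ Pᴴ = P := by
  classical
  set U : Matrix (Fin m) (Fin m) ℂ := (hA.eigenvectorUnitary : Matrix (Fin m) (Fin m) ℂ)
    with hUdef
  have hUU : star U * U = 1 := (Matrix.mem_unitaryGroup_iff').mp hA.eigenvectorUnitary.2
  set d : Fin m → ℂ := Complex.ofReal ∘ hA.eigenvalues with hd
  set g : Fin m → ℂ := fun i => if hA.eigenvalues i = 0 then 0 else (d i)⁻¹ with hg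
  have hspec : A = U * diagonal d * star U := hA.spectral_theorem
  have trip : ∀ X Y : Matrix (Fin m) (Fin m) ℂ,
      (U * X * star U) * (U * Y * star U) = U * (X * Y) * star U := by
    intro X Y
    calc (U * X * star U) * (U * Y * star U)
        = U * (X * ((star U * U) * (Y * star U))) := by simp only [Matrix.mul_assoc]
      _ = U * (X * Y) * star U := by rw [hUU, Matrix.one_mul]; simp only [Matrix.mul_assoc]
  have hdg : diagonal d * diagonal g = diagonal (d * g) := diagonal_mul_diagonal d g
  have hdgd : diagonal (d * g) * diagonal d = diagonal d := by
    rw [diagonal_mul_diagonal]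
    refine congrArg diagonal ?_
    funext i
    by_cases h : hA.eigenvalues i = 0
    · simp [hd, hg, h, Function.comp]
    · have hne : d i ≠ 0 := by simp [hd, Function.comp]; exact_mod_cast h
      simp only [hg, Pi.mul_apply, if_neg h]
      field_simp
  have hstar : star (d * g) = d * g := by
    funext i
    by_cases h : hA.eigenvalues i = 0
    · simp [hd, hg, h, Function.comp]
    · have hne : d i ≠ 0 := by simp [hd, Function.comp]; exact_mod_cast h
      simp only [Pi.star_apply, Pi.mul_apply, hg, if_neg h, mul_inv_cancel₀ hne]
      simp
  have hgstar : star g = g := by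
    funext i
    by_cases h : hA.eigenvalues i = 0
    · simp [hg, h]
    · have hne : d i ≠ 0 := by simp [hd, Function.comp]; exact_mod_cast h
      simp only [Pi.star_apply, hg, if_neg h, star_inv₀]
      congr 1
      simp [hd, Function.comp]
  refine ⟨U * diagonal g * star U, ?_, ?_, ?_⟩
  case _ => rw [hspec, trip, hdg, trip, hdgd]
  case _ =>
    rw [hspec, trip, hdg]
    calc (U * diagonal (d * g) * star U)ᴴ
        = U * (diagonal (d * g))ᴴ * star U := by
          simp only [conjTranspose_mul, Matrix.star_eq_conjTranspose,
            conjTranspose_conjTranspose, Matrix.mul_assoc]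
      _ = U * diagonal (d * g) * star U := by rw [diagonal_conjTranspose, hstar]
  case _ =>
    calc (U * diagonal g * star U)ᴴ
        = U * (diagonal g)ᴴ * star U := by
          simp only [conjTranspose_mul, Matrix.star_eq_conjTranspose,
            conjTranspose_conjTranspose, Matrix.mul_assoc]
      _ = U * diagonal g * star U := by rw [diagonal_conjTranspose, hgstar]
variable {m n : ℕ}




lemma psd_fromBlocks_diag {A : Matrix (Fin m) (Fin m) ℂ} {S : Matrix (Fin n) (Fin n) ℂ}
    (hA : A.PosSemidef) (hS : S.PosSemidef) : (fromBlocks A 0 0 S).PosSemidef := by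
  rw [posSemidef_iff_dotProduct_mulVec]
  constructor
  · rw [IsHermitian, fromBlocks_conjTranspose, hA.1.eq, hS.1.eq, conjTranspose_zero, conjTranspose_zero]
  · intro z
    have hz : z = Sum.elim (z ∘ Sum.inl) (z ∘ Sum.inr) := (Sum.elim_comp_inl_inr z).symm
    rw [hz]
    have := quad_blocks A (0 : Matrix (Fin m) (Fin n) ℂ) S (z ∘ Sum.inl) (z ∘ Sum.inr)
    simp only [conjTranspose_zero] at this
    rw [this]
    simp only [zero_mulVec, mulVec_zero, dotProduct_zero, add_zero, zero_add]
    exact add_nonneg (hA.dotProduct_mulVec_nonneg _) (hS.dotProduct_mulVec_nonneg _)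

/-- Smul'jan's theorem: the Hermitian block matrix `[[A, B], [Bᴴ, C]]` is
positive semidefinite iff `A` is positive semidefinite, `B = A * W` for some
`W`, and `C - Wᴴ * A * W` is positive semidefinite. -/
theorem smuljan_posSemidef_iff (m n : ℕ)
    (A : Matrix (Fin m) (Fin m) ℂ) (B : Matrix (Fin m) (Fin n) ℂ)
    (C : Matrix (Fin n) (Fin n) ℂ)
    (hA : A.IsHermitian) (hC : C.IsHermitian) :
    (Matrix.fromBlocks A B Bᴴ C).PosSemidef ↔
      A.PosSemidef ∧ ∃ W : Matrix (Fin m) (Fin n) ℂ,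
        B = A * W ∧ (C - Wᴴ * A * W).PosSemidef := by
  constructor
  · intro hM
    have hA' : A.PosSemidef := by
      have := hM.submatrix (Sum.inl : Fin m → Fin m ⊕ Fin n)
      convert this using 1
      ext i j; rfl
    obtain ⟨P, hP1, hP2, hPH⟩ := exists_pinv hA
    set W : Matrix (Fin m) (Fin n) ℂ := P * B with hW
    have hN : A * (1 - P * A) = 0 := by
      rw [Matrix.mul_sub, Matrix.mul_one, ← Matrix.mul_assoc, hP1, sub_self]
    have hBN : Bᴴ * (1 - P * A) = 0 := by
      ext i j
      have h1 : A *ᵥ ((1 - P * A) *ᵥ Pi.single j 1) = 0 := by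
        rw [mulVec_mulVec, hN, zero_mulVec]
      have h2 := ker_lemma hM _ h1
      rw [mulVec_mulVec] at h2
      have := congrFun h2 i
      simpa [mulVec_single] using this
    have hNB : (1 - A * P) * B = 0 := by
      have := congrArg conjTranspose hBN
      rwa [conjTranspose_mul, conjTranspose_conjTranspose, conjTranspose_sub,
        conjTranspose_one, conjTranspose_mul, hA.eq, hPH,
        conjTranspose_zero] at this
    have hB : B = A * W := by
      have h0 : B - A * P * B = 0 := by
        have := hNB
        rw [Matrix.sub_mul, Matrix.one_mul, Matrix.mul_assoc] at this
        rwa [Matrix.mul_assoc]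
      rw [hW, ← Matrix.mul_assoc]
      exact sub_eq_zero.mp h0
    refine ⟨hA', W, hB, posSemidef_iff_dotProduct_mulVec.mpr ⟨?_, ?_⟩⟩
    · exact hC.sub (isHermitian_conjTranspose_mul_mul W hA)
    · intro y
      have := hM.dotProduct_mulVec_nonneg (Sum.elim (-(W *ᵥ y)) y)
      rw [quad_blocks] at this
      have hterm : ∀ v : Fin m → ℂ, star (W *ᵥ y) ⬝ᵥ v = star y ⬝ᵥ Wᴴ *ᵥ v := by
        intro v
        rw [star_mulVec, ← dotProduct_mulVec]
      set q : ℂ := star y ⬝ᵥ (Wᴴ * A * W) *ᵥ y with hq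
      have e1 : star (-(W *ᵥ y)) ⬝ᵥ A *ᵥ (-(W *ᵥ y)) = q := by
        rw [star_neg, neg_dotProduct, mulVec_neg, dotProduct_neg, neg_neg, hterm, hq]
        simp only [← mulVec_mulVec]
      have e2 : star (-(W *ᵥ y)) ⬝ᵥ B *ᵥ y = -q := by
        rw [star_neg, neg_dotProduct, hterm, hB, hq]
        simp only [← mulVec_mulVec]
      have e3 : star y ⬝ᵥ Bᴴ *ᵥ (-(W *ᵥ y)) = -q := by
        rw [mulVec_neg, dotProduct_neg, hB, conjTranspose_mul, hA.eq, hq]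
        simp only [← mulVec_mulVec]
      rw [e1, e2, e3] at this
      rw [Matrix.sub_mulVec, dotProduct_sub, ← hq]
      rw [show q + -q + -q + star y ⬝ᵥ C *ᵥ y = star y ⬝ᵥ C *ᵥ y - q by ring] at this
      exact this
  · rintro ⟨hA', W, hB, hS⟩
    have hD : (fromBlocks A 0 0 (C - Wᴴ * A * W)).PosSemidef := psd_fromBlocks_diag hA' hS
    have hL : fromBlocks A B Bᴴ C =
        (fromBlocks (1 : Matrix (Fin m) (Fin m) ℂ) W 0 1)ᴴ *
          (fromBlocks A 0 0 (C - Wᴴ * A * W)) *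
          (fromBlocks (1 : Matrix (Fin m) (Fin m) ℂ) W 0 1) := by
      rw [fromBlocks_conjTranspose, fromBlocks_multiply, fromBlocks_multiply]
      simp only [conjTranspose_one, conjTranspose_zero, Matrix.one_mul, Matrix.mul_one,
        Matrix.zero_mul, Matrix.mul_zero, add_zero, zero_add]
      rw [hB, conjTranspose_mul, hA.eq,
        show Wᴴ * A * W + (C - Wᴴ * A * W) = C from by abel]
    rw [hL]
    exact hD.conjTranspose_mul_mul_same _
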